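/- For every identity Y-sequence ι, we have ι ↔*_{R_P} λ (ι is Peiffer equivalent to the empty sequence λ) if and only if α(ι) = 0 in ℤG[ℛ]. -/

import Mathlib

/-- A letter `(ρ, u)^ε` of a Y-sequence: an element of `Y = ℛ × F(X)` together with a
sign (`true` for `+`, `false` for `-`). -/
abbrev YLetter (X R : Type) : Type := (R × FreeGroup X) × Bool

/-- The action of `F(X)` on letters: `(ρ, u)^ε · x := (ρ, u x)^ε`. -/
def actLetter {X R : Type} (x : FreeGroup X) (y : YLetter X R) : YLetter X R :=
  ((y.1.1, y.1.2 * x), y.2)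

/-- The letterwise action of `F(X)` on Y-sequences. -/
def actSeq {X R : Type} (x : FreeGroup X) (a : List (YLetter X R)) : List (YLetter X R) :=
  a.map (actLetter x)

/-- `δ((ρ, u)^ε) := u⁻¹ (w ρ)^{ε} u`. -/
def deltaLetter {X R : Type} (w : R → FreeGroup X) (y : YLetter X R) : FreeGroup X :=
  y.1.2⁻¹ * (if y.2 then w y.1.1 else (w y.1.1)⁻¹) * y.1.2

/-- The monoid homomorphism `δ` on Y-sequences. -/
def deltaSeq {X R : Type} (w : R → FreeGroup X) (a : List (YLetter X R)) : FreeGroup X :=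
  (a.map (deltaLetter w)).prod

/-- The Peiffer rules `R_P`:
`y⁻z⁺y⁺ → z⁺^{δ y⁺}`, `y⁺z⁻y⁻ → z⁻^{δ y⁻}`, `y⁻y⁺ → λ` and `y⁺y⁻ → λ`. -/
inductive PeifferRule {X R : Type} (w : R → FreeGroup X) :
    List (YLetter X R) → List (YLetter X R) → Prop
  | r1 (y z : R × FreeGroup X) :
      PeifferRule w [(y, false), (z, true), (y, true)]
        [actLetter (deltaLetter w (y, true)) (z, true)]
  | r2 (y z : R × FreeGroup X) :
      PeifferRule w [(y, true), (z, false), (y, false)]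
        [actLetter (deltaLetter w (y, false)) (z, false)]
  | r3 (y : R × FreeGroup X) : PeifferRule w [(y, false), (y, true)] []
  | r4 (y : R × FreeGroup X) : PeifferRule w [(y, true), (y, false)] []

/-- One-step rewriting with respect to the Peiffer rules. -/
def PeifferStep {X R : Type} (w : R → FreeGroup X)
    (a b : List (YLetter X R)) : Prop :=
  ∃ u v lhs rhs, PeifferRule w lhs rhs ∧ a = u ++ lhs ++ v ∧ b = u ++ rhs ++ v

/-- Peiffer equivalence `↔*_{R_P}`: the reflexive–symmetric–transitive closure
of one-step Peiffer rewriting. -/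
def PeifferEquiv {X R : Type} (w : R → FreeGroup X) :
    List (YLetter X R) → List (YLetter X R) → Prop :=
  Relation.EqvGen (PeifferStep w)

/-- The formal inverse `yₙ^{-εₙ} ⋯ y₁^{-ε₁}` of a Y-sequence `y₁^{ε₁} ⋯ yₙ^{εₙ}`. -/
def invSeq {X R : Type} (a : List (YLetter X R)) : List (YLetter X R) :=
  a.reverse.map (fun y => (y.1, !y.2))

/-- The group `G` presented by `grp⟨X, ℛ, w⟩`. -/
abbrev PresGroup {X R : Type} (w : R → FreeGroup X) : Type :=
  FreeGroup X ⧸ Subgroup.normalClosure (Set.range w)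

/-- The quotient homomorphism `θ : F(X) → G`. -/
def theta {X R : Type} (w : R → FreeGroup X) : FreeGroup X →* PresGroup w :=
  QuotientGroup.mk' (Subgroup.normalClosure (Set.range w))

/-- `α((ρ,u)^ε) := ρ · (ε θ(u)) ∈ ℤG[ℛ]`. -/
noncomputable def alphaLetter {X R : Type} (w : R → FreeGroup X) (y : YLetter X R) :
    R →₀ MonoidAlgebra ℤ (PresGroup w) :=
  Finsupp.single y.1.1
    ((MonoidAlgebra.single (theta w y.1.2) (if y.2 then (1 : ℤ) else -1) :
      MonoidAlgebra ℤ (PresGroup w)))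

/-- `α` on Y-sequences: `α((ρ₁,u₁)^{ε₁}⋯(ρₙ,uₙ)^{εₙ}) := Σᵢ ρᵢ·(εᵢθ(uᵢ))`,
with the empty sequence sent to `0`. -/
noncomputable def alphaSeq {X R : Type} (w : R → FreeGroup X)
    (a : List (YLetter X R)) : R →₀ MonoidAlgebra ℤ (PresGroup w) :=
  (a.map (alphaLetter w)).sum


namespace PeifferAux

open Relation

variable {X R : Type} {w : R → FreeGroup X}

local notation "YL" => YLetter X R
local notation "PE" => PeifferEquiv w

/-! ### Basic lemmas about the action, `δ`, `invSeq` -/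

@[simp] lemma actLetter_actLetter (x₁ x₂ : FreeGroup X) (y : YL) :
    actLetter x₂ (actLetter x₁ y) = actLetter (x₁ * x₂) y := by
  simp [actLetter, mul_assoc]

@[simp] lemma actLetter_one (y : YL) : actLetter 1 y = y := by
  simp [actLetter]

@[simp] lemma actSeq_nil (x : FreeGroup X) : actSeq x ([] : List YL) = [] := rfl

@[simp] lemma actSeq_cons (x : FreeGroup X) (y : YL) (a : List YL) :
    actSeq x (y :: a) = actLetter x y :: actSeq x a := rfl

@[simp] lemma actSeq_actSeq (x₁ x₂ : FreeGroup X) (a : List YL) :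
    actSeq x₂ (actSeq x₁ a) = actSeq (x₁ * x₂) a := by
  induction a with
  | nil => rfl
  | cons y a ih => simp [ih]

/-- The inverse of a letter. -/
def barL (y : YL) : YL := (y.1, !y.2)

lemma deltaLetter_barL (y : YL) : deltaLetter w (barL y) = (deltaLetter w y)⁻¹ := by
  cases y with
  | mk p b =>
    cases b <;> simp [deltaLetter, barL, mul_assoc]

lemma deltaLetter_actLetter (x : FreeGroup X) (y : YL) :
    deltaLetter w (actLetter x y) = x⁻¹ * deltaLetter w y * x := by
  cases y with
  | mk p b => cases b <;> simp [deltaLetter, actLetter, mul_assoc]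

@[simp] lemma invSeq_nil : invSeq ([] : List YL) = [] := rfl

lemma invSeq_cons (y : YL) (a : List YL) :
    invSeq (y :: a) = invSeq a ++ [barL y] := by
  simp [invSeq, barL]

@[simp] lemma deltaSeq_nil : deltaSeq w ([] : List YL) = 1 := rfl

@[simp] lemma deltaSeq_cons (y : YL) (a : List YL) :
    deltaSeq w (y :: a) = deltaLetter w y * deltaSeq w a := by
  simp [deltaSeq]

@[simp] lemma deltaSeq_append (a b : List YL) :
    deltaSeq w (a ++ b) = deltaSeq w a * deltaSeq w b := by
  simp [deltaSeq]

/-! ### Basic lemmas about Peiffer equivalence -/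

lemma pe_refl {a : List YL} : PE a a := EqvGen.refl a

lemma pe_symm {a b : List YL} (h : PE a b) : PE b a := EqvGen.symm _ _ h

lemma pe_trans {a b c : List YL} (h : PE a b) (h' : PE b c) : PE a c :=
  EqvGen.trans _ _ _ h h'

lemma pe_of_rule {a b : List YL} (h : PeifferRule w a b) : PE a b := by
  refine EqvGen.rel _ _ ⟨[], [], a, b, h, by simp, by simp⟩

lemma step_append {a b : List YL} (h : PeifferStep w a b) (c d : List YL) :
    PeifferStep w (c ++ a ++ d) (c ++ b ++ d) := by
  obtain ⟨u, v, lhs, rhs, hr, ha, hb⟩ := h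
  exact ⟨c ++ u, v ++ d, lhs, rhs, hr, by simp [ha], by simp [hb]⟩

lemma pe_append_ctx {a b : List YL} (h : PE a b) (c d : List YL) :
    PE (c ++ a ++ d) (c ++ b ++ d) := by
  induction h with
  | rel x y hxy => exact EqvGen.rel _ _ (step_append hxy c d)
  | refl x => exact pe_refl
  | symm x y _ ih => exact pe_symm ih
  | trans x y z _ _ ih₁ ih₂ => exact pe_trans ih₁ ih₂

lemma pe_append {a b c d : List YL} (h : PE a b) (h' : PE c d) :
    PE (a ++ c) (b ++ d) := by
  have h1 : PE (a ++ c) (b ++ c) := by simpa using pe_append_ctx h [] c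
  have h2 : PE (b ++ c) (b ++ d) := by simpa using pe_append_ctx h' b []
  exact pe_trans h1 h2

lemma pe_cons (y : YL) {a b : List YL} (h : PE a b) : PE (y :: a) (y :: b) := by
  simpa using pe_append (pe_refl (a := [y])) h

lemma pe_cancel (y : YL) : PE [y, barL y] [] := by
  cases y with
  | mk p b =>
    cases b
    · exact pe_of_rule (PeifferRule.r3 p)
    · exact pe_of_rule (PeifferRule.r4 p)

lemma pe_cancel' (y : YL) : PE [barL y, y] [] := by
  cases y with
  | mk p b =>
    cases b
    · exact pe_of_rule (PeifferRule.r4 p)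
    · exact pe_of_rule (PeifferRule.r3 p)

lemma pe_mul_inv (a : List YL) : PE (a ++ invSeq a) [] := by
  induction a with
  | nil => exact pe_refl
  | cons y a ih =>
    have : PE (y :: (a ++ invSeq a) ++ [barL y]) (y :: ([] : List YL) ++ [barL y]) :=
      pe_append (pe_cons y ih) pe_refl
    have h2 : PE (y :: ([] : List YL) ++ [barL y]) [] := pe_cancel y
    have h3 : y :: a ++ invSeq (y :: a) = y :: (a ++ invSeq a) ++ [barL y] := by
      simp [invSeq_cons]
    rw [h3]
    exact pe_trans this h2

lemma pe_inv_mul (a : List YL) : PE (invSeq a ++ a) [] := by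
  induction a with
  | nil => exact pe_refl
  | cons y a ih =>
    have h3 : invSeq (y :: a) ++ (y :: a) = invSeq a ++ ([barL y, y] ++ a) := by
      simp [invSeq_cons]
    rw [h3]
    have : PE ([barL y, y] ++ a) a := by simpa using pe_append (pe_cancel' y) (pe_refl (a := a))
    exact pe_trans (pe_append (pe_refl (a := invSeq a)) this) ih

end PeifferAux

namespace PeifferAux

variable {X R : Type} {w : R → FreeGroup X}

local notation "YL" => YLetter X R
local notation "PE" => PeifferEquiv w

@[simp] lemma actSeq_one (a : List YL) : actSeq 1 a = a := by
  induction a with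
  | nil => rfl
  | cons y a ih => simp [ih]

lemma deltaLetter_false (p : R × FreeGroup X) :
    deltaLetter w ((p, false) : YL) = (deltaLetter w ((p, true) : YL))⁻¹ :=
  deltaLetter_barL ((p, true) : YL)

/-- Conjugation of a letter by a letter. -/
lemma pe_conj_letter (s z : YL) : PE [barL s, z, s] [actLetter (deltaLetter w s) z] := by
  obtain ⟨y, b⟩ := s
  obtain ⟨zz, c⟩ := z
  cases b <;> cases c
  · -- s negative, z negative : rule r2
    exact pe_of_rule (PeifferRule.r2 y zz)
  · -- s negative, z positive : derived
    set d : FreeGroup X := deltaLetter w ((y, false) : YL) with hd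
    set z' : R × FreeGroup X := (zz.1, zz.2 * d) with hz'
    have hA : PE [(y, false), (z', true), (y, true)] [(zz, true)] := by
      have h0 := pe_of_rule (w := w) (PeifferRule.r1 y z')
      have e : actLetter (deltaLetter w ((y, true) : YL)) ((z', true) : YL)
          = ((zz, true) : YL) := by
        have : deltaLetter w ((y, true) : YL) = d⁻¹ := by
          rw [hd, deltaLetter_false]; simp
        simp [actLetter, hz', this, mul_assoc]
      rwa [e] at h0
    have h2 : PE ([(y, true)] ++ [(zz, true)] ++ [(y, false)])
        ([(y, true)] ++ [(y, false), (z', true), (y, true)] ++ [(y, false)]) :=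
      pe_append_ctx (pe_symm hA) _ _
    have h3 : PE ([(y, true), (y, false)] ++ [((z', true) : YL)] ++ [(y, true), (y, false)])
        ([] ++ [((z', true) : YL)] ++ []) := by
      refine pe_append (pe_append ?_ pe_refl) ?_ <;>
        exact pe_of_rule (PeifferRule.r4 y)
    have hlist : ([(y, true)] ++ [((y, false) : YL), (z', true), (y, true)] ++ [(y, false)])
        = ([(y, true), (y, false)] ++ [((z', true) : YL)] ++ [(y, true), (y, false)]) := by
      simp
    have : PE ([(y, true)] ++ [(((zz, true)) : YL)] ++ [(y, false)]) [(z', true)] := by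
      refine pe_trans h2 ?_
      rw [hlist]
      simpa using h3
    simpa [actLetter, hz', barL] using this
  · -- s positive, z negative : derived
    set d : FreeGroup X := deltaLetter w ((y, true) : YL) with hd
    set z' : R × FreeGroup X := (zz.1, zz.2 * d) with hz'
    have hA : PE [(y, true), (z', false), (y, false)] [(zz, false)] := by
      have h0 := pe_of_rule (w := w) (PeifferRule.r2 y z')
      have e : actLetter (deltaLetter w ((y, false) : YL)) ((z', false) : YL)
          = ((zz, false) : YL) := by
        rw [deltaLetter_false]
        simp [actLetter, hz', mul_assoc, hd]
      rwa [e] at h0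
    have h2 : PE ([(y, false)] ++ [(zz, false)] ++ [(y, true)])
        ([(y, false)] ++ [(y, true), (z', false), (y, false)] ++ [(y, true)]) :=
      pe_append_ctx (pe_symm hA) _ _
    have h3 : PE ([(y, false), (y, true)] ++ [((z', false) : YL)] ++ [(y, false), (y, true)])
        ([] ++ [((z', false) : YL)] ++ []) := by
      refine pe_append (pe_append ?_ pe_refl) ?_ <;>
        exact pe_of_rule (PeifferRule.r3 y)
    have hlist : ([(y, false)] ++ [((y, true) : YL), (z', false), (y, false)] ++ [(y, true)])
        = ([(y, false), (y, true)] ++ [((z', false) : YL)] ++ [(y, false), (y, true)]) := by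
      simp
    have : PE ([(y, false)] ++ [(((zz, false)) : YL)] ++ [(y, true)]) [(z', false)] := by
      refine pe_trans h2 ?_
      rw [hlist]
      simpa using h3
    simpa [actLetter, hz', barL] using this
  · -- s positive, z positive : rule r1
    exact pe_of_rule (PeifferRule.r1 y zz)

/-- Conjugation of a sequence by a letter. -/
lemma pe_conj_letter_seq (s : YL) (τ : List YL) :
    PE (barL s :: (τ ++ [s])) (actSeq (deltaLetter w s) τ) := by
  induction τ with
  | nil => simpa using pe_cancel' s
  | cons z τ ih =>
    have h1 : PE ([barL s, z] ++ [] ++ (τ ++ [s]))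
        ([barL s, z] ++ [s, barL s] ++ (τ ++ [s])) :=
      pe_append (pe_append pe_refl (pe_symm (pe_cancel s))) pe_refl
    have hlist : ([barL s, z] ++ [s, barL s] ++ (τ ++ [s]))
        = [barL s, z, s] ++ (barL s :: (τ ++ [s])) := by simp
    have h2 : PE ([barL s, z, s] ++ (barL s :: (τ ++ [s])))
        ([actLetter (deltaLetter w s) z] ++ actSeq (deltaLetter w s) τ) :=
      pe_append (pe_conj_letter s z) ih
    have := pe_trans h1 (by rw [hlist]; exact h2)
    simpa using this

/-- Conjugation of a sequence by a sequence. -/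
lemma pe_conj (σ : List YL) : ∀ τ : List YL,
    PE (invSeq σ ++ τ ++ σ) (actSeq (deltaSeq w σ) τ) := by
  induction σ with
  | nil => intro τ; simpa using pe_refl
  | cons s σ ih =>
    intro τ
    have hlist : invSeq (s :: σ) ++ τ ++ (s :: σ)
        = invSeq σ ++ (barL s :: (τ ++ [s])) ++ σ := by
      simp [invSeq_cons]
    have h1 : PE (invSeq σ ++ (barL s :: (τ ++ [s])) ++ σ)
        (invSeq σ ++ actSeq (deltaLetter w s) τ ++ σ) :=
      pe_append_ctx (pe_conj_letter_seq s τ) _ _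
    have h2 := ih (actSeq (deltaLetter w s) τ)
    rw [hlist]
    refine pe_trans h1 (pe_trans h2 ?_)
    simp
    exact pe_refl
    
lemma pe_comm {σ : List YL} (h : deltaSeq w σ = 1) (τ : List YL) :
    PE (σ ++ τ) (τ ++ σ) := by
  have h1 : PE (invSeq σ ++ τ ++ σ) τ := by
    have h0 := pe_conj (w := w) σ τ
    rwa [h, actSeq_one] at h0
  have h2 : PE (σ ++ (invSeq σ ++ τ ++ σ)) (σ ++ τ) := pe_append pe_refl h1
  have h3 : PE (τ ++ σ) (σ ++ (invSeq σ ++ τ ++ σ)) := by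
    have h4 : PE (((σ ++ invSeq σ) ++ (τ ++ σ))) ([] ++ (τ ++ σ)) :=
      pe_append (pe_mul_inv σ) pe_refl
    have : σ ++ (invSeq σ ++ τ ++ σ) = (σ ++ invSeq σ) ++ (τ ++ σ) := by simp
    rw [this]
    simpa using pe_symm h4
  exact pe_symm (pe_trans h3 h2)

end PeifferAux

namespace PeifferAux

variable {X R : Type} {w : R → FreeGroup X}

local notation "YL" => YLetter X R
local notation "PE" => PeifferEquiv w

/-! ### `δ` is invariant under Peiffer equivalence -/

lemma delta_rule {a b : List YL} (h : PeifferRule w a b) :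
    deltaSeq w a = deltaSeq w b := by
  cases h with
  | r1 y z =>
    simp [deltaLetter_actLetter, deltaLetter_false, mul_assoc]
  | r2 y z =>
    simp [deltaLetter_actLetter, deltaLetter_false, mul_assoc]
  | r3 y => simp [deltaLetter_false]
  | r4 y => simp [deltaLetter_false]

lemma delta_step {a b : List YL} (h : PeifferStep w a b) :
    deltaSeq w a = deltaSeq w b := by
  obtain ⟨u, v, lhs, rhs, hr, rfl, rfl⟩ := h
  simp [delta_rule hr]

lemma delta_pe {a b : List YL} (h : PE a b) : deltaSeq w a = deltaSeq w b := by
  induction h with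
  | rel x y hxy => exact delta_step hxy
  | refl x => rfl
  | symm x y _ ih => exact ih.symm
  | trans x y z _ _ ih₁ ih₂ => exact ih₁.trans ih₂

lemma delta_invSeq (a : List YL) : deltaSeq w (invSeq a) = (deltaSeq w a)⁻¹ := by
  induction a with
  | nil => simp
  | cons y a ih => simp [invSeq_cons, ih, deltaLetter_barL, mul_assoc]

lemma delta_actSeq (x : FreeGroup X) (a : List YL) :
    deltaSeq w (actSeq x a) = x⁻¹ * deltaSeq w a * x := by
  induction a with
  | nil => simp
  | cons y a ih => simp [ih, deltaLetter_actLetter, mul_assoc]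

/-! ### The image of `δ` is the normal closure of the relators -/

/-- The set of values of `δ`, as a subgroup of the free group. -/
def deltaRange (w : R → FreeGroup X) : Subgroup (FreeGroup X) where
  carrier := {x | ∃ σ : List YL, deltaSeq w σ = x}
  one_mem' := ⟨[], rfl⟩
  mul_mem' := by
    rintro x y ⟨σ, rfl⟩ ⟨τ, rfl⟩
    exact ⟨σ ++ τ, by simp⟩
  inv_mem' := by
    rintro x ⟨σ, rfl⟩
    exact ⟨invSeq σ, delta_invSeq σ⟩

instance deltaRange_normal : (deltaRange w).Normal := by
  constructor
  rintro x ⟨σ, rfl⟩ g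
  exact ⟨actSeq g⁻¹ σ, by simp [delta_actSeq]⟩

lemma exists_deltaSeq {x : FreeGroup X}
    (hx : x ∈ Subgroup.normalClosure (Set.range w)) :
    ∃ σ : List YL, deltaSeq w σ = x := by
  have : x ∈ deltaRange w := by
    refine Subgroup.normalClosure_le_normal (N := deltaRange w) ?_ hx
    rintro x ⟨ρ, rfl⟩
    exact ⟨[((ρ, 1), true)], by simp [deltaSeq, deltaLetter]⟩
  exact this

/-! ### `α` is invariant under Peiffer equivalence -/

@[simp] lemma alphaSeq_nil : alphaSeq w ([] : List YL) = 0 := rfl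

@[simp] lemma alphaSeq_cons (y : YL) (a : List YL) :
    alphaSeq w (y :: a) = alphaLetter w y + alphaSeq w a := by
  simp [alphaSeq]

@[simp] lemma alphaSeq_append (a b : List YL) :
    alphaSeq w (a ++ b) = alphaSeq w a + alphaSeq w b := by
  simp [alphaSeq]

lemma theta_w (ρ : R) : theta w (w ρ) = 1 := by
  exact (QuotientGroup.eq_one_iff _).2
    (Subgroup.subset_normalClosure (Set.mem_range_self ρ))

lemma theta_deltaLetter (y : YL) : theta w (deltaLetter w y) = 1 := by
  obtain ⟨⟨ρ, u⟩, b⟩ := y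
  cases b <;> simp [deltaLetter, theta_w]

lemma alphaLetter_actLetter {x : FreeGroup X} (hx : theta w x = 1) (y : YL) :
    alphaLetter w (actLetter x y) = alphaLetter w y := by
  simp [alphaLetter, actLetter, map_mul, hx]
  rfl

lemma alphaLetter_false (p : R × FreeGroup X) :
    alphaLetter w ((p, false) : YL) = - alphaLetter w ((p, true) : YL) := by
  simp [alphaLetter, Finsupp.single_neg, MonoidAlgebra.single_neg]

lemma alpha_rule {a b : List YL} (h : PeifferRule w a b) :
    alphaSeq w a = alphaSeq w b := by
  cases h with
  | r1 y z =>
    simp [alphaLetter_actLetter (theta_deltaLetter _), alphaLetter_false]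
  | r2 y z =>
    simp [alphaLetter_actLetter (theta_deltaLetter _), alphaLetter_false]
  | r3 y => simp [alphaLetter_false]
  | r4 y => simp [alphaLetter_false]

lemma alpha_step {a b : List YL} (h : PeifferStep w a b) :
    alphaSeq w a = alphaSeq w b := by
  obtain ⟨u, v, lhs, rhs, hr, rfl, rfl⟩ := h
  simp [alpha_rule hr]

lemma alpha_pe {a b : List YL} (h : PE a b) : alphaSeq w a = alphaSeq w b := by
  induction h with
  | rel x y hxy => exact alpha_step hxy
  | refl x => rfl
  | symm x y _ ih => exact ih.symm
  | trans x y z _ _ ih₁ ih₂ => exact ih₁.trans ih₂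

end PeifferAux

namespace PeifferAux

variable {X R : Type} {w : R → FreeGroup X}

local notation "YL" => YLetter X R
local notation "PE" => PeifferEquiv w

lemma pe_inv_congr {a b : List YL} (h : PE a b) : PE (invSeq a) (invSeq b) := by
  have h1 : PE (invSeq b) ((invSeq a ++ a) ++ invSeq b) :=
    pe_symm (by simpa using pe_append (pe_inv_mul a) (pe_refl (a := invSeq b)))
  have h2 : PE ((invSeq a ++ a) ++ invSeq b) (invSeq a ++ (b ++ invSeq b)) := by
    have := pe_append (pe_append (pe_refl (a := invSeq a)) h) (pe_refl (a := invSeq b))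
    simpa using this
  have h3 : PE (invSeq a ++ (b ++ invSeq b)) (invSeq a) := by
    simpa using pe_append (pe_refl (a := invSeq a)) (pe_mul_inv b)
  exact pe_symm (pe_trans h1 (pe_trans h2 h3))

/-- The setoid of Peiffer equivalence. -/
def peSetoid (w : R → FreeGroup X) : Setoid (List (YLetter X R)) :=
  ⟨PeifferEquiv w, Relation.EqvGen.is_equivalence _⟩

/-- The group of Y-sequences modulo Peiffer equivalence. -/
def PC (w : R → FreeGroup X) : Type := Quotient (peSetoid w)

/-- Class of a Y-sequence in `PC w`. -/
def PC.mk (w : R → FreeGroup X) (a : List (YLetter X R)) : PC w :=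
  Quotient.mk (peSetoid w) a

instance : Mul (PC w) :=
  ⟨fun a b => Quotient.liftOn₂ a b (fun x y => PC.mk w (x ++ y))
    (fun _ _ _ _ h h' => Quotient.sound (pe_append h h'))⟩

instance : One (PC w) := ⟨PC.mk w []⟩

instance : Inv (PC w) :=
  ⟨fun a => Quotient.liftOn a (fun x => PC.mk w (invSeq x))
    (fun _ _ h => Quotient.sound (pe_inv_congr h))⟩

@[simp] lemma PC.mk_mul (a b : List YL) : PC.mk w a * PC.mk w b = PC.mk w (a ++ b) := rfl

@[simp] lemma PC.mk_inv (a : List YL) : (PC.mk w a)⁻¹ = PC.mk w (invSeq a) := rfl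

lemma PC.one_def : (1 : PC w) = PC.mk w [] := rfl

instance : Group (PC w) where
  mul_assoc a b c := by
    induction a using Quotient.ind
    induction b using Quotient.ind
    induction c using Quotient.ind
    exact congrArg (PC.mk w) (List.append_assoc _ _ _)
  one_mul a := by
    induction a using Quotient.ind
    rfl
  mul_one a := by
    induction a using Quotient.ind
    exact congrArg (PC.mk w) (List.append_nil _)
  inv_mul_cancel a := by
    induction a using Quotient.ind with
    | _ x => exact Quotient.sound (pe_inv_mul x)

/-- The boundary homomorphism `∂ : PC w →* F(X)` induced by `δ`. -/
def pdel (w : R → FreeGroup X) : PC w →* FreeGroup X where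
  toFun := Quotient.lift (deltaSeq w) (fun _ _ h => delta_pe h)
  map_one' := rfl
  map_mul' a b := by
    induction a using Quotient.ind
    induction b using Quotient.ind
    exact deltaSeq_append _ _

@[simp] lemma pdel_mk (a : List YL) : pdel w (PC.mk w a) = deltaSeq w a := rfl

/-- Elements of the kernel of `∂` are central. -/
lemma pdel_ker_central {k : PC w} (hk : pdel w k = 1) (c : PC w) : k * c = c * k := by
  induction k using Quotient.ind with
  | _ κ =>
    induction c using Quotient.ind with
    | _ γ => exact Quotient.sound (pe_comm hk γ)

end PeifferAux

namespace PeifferAux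

variable {X R : Type} {w : R → FreeGroup X}

local notation "YL" => YLetter X R

/-- By the Nielsen–Schreier theorem, the range of `∂` is a free group; choose a
section of `∂` on its range by freely choosing preimages of a basis. -/
noncomputable def sect (w : R → FreeGroup X) : (pdel w).range →* PC w :=
  IsFreeGroup.lift (fun gen =>
    (MonoidHom.mem_range.1 (IsFreeGroup.of (G := (pdel w).range) gen).2).choose)

lemma pdel_sect (n : (pdel w).range) : pdel w (sect w n) = ↑n := by
  have : (pdel w).comp (sect w) = (pdel w).range.subtype := by
    apply IsFreeGroup.ext_hom
    intro gen
    have h := (MonoidHom.mem_range.1 (IsFreeGroup.of (G := (pdel w).range) gen).2).choose_spec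
    simp only [MonoidHom.comp_apply, sect, IsFreeGroup.lift_of]
    exact h
  exact DFunLike.congr_fun this n

/-- The underlying function of the retraction onto the kernel of `∂`. -/
noncomputable def phiFun (w : R → FreeGroup X) (c : PC w) : PC w :=
  c * (sect w ⟨pdel w c, ⟨c, rfl⟩⟩)⁻¹

lemma phiFun_pdel_eq_one (c : PC w) : pdel w (phiFun w c) = 1 := by
  rw [phiFun, map_mul, map_inv, pdel_sect]
  simp

/-- The retraction onto the kernel of `∂`. -/
noncomputable def phi (w : R → FreeGroup X) : PC w →* PC w where
  toFun := phiFun w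
  map_one' := by
    have h1 : (⟨pdel w 1, ⟨1, rfl⟩⟩ : (pdel w).range) = 1 := by
      ext; simp
    rw [phiFun, h1, map_one]
    simp
  map_mul' a b := by
    have hmul : (⟨pdel w (a * b), ⟨a * b, rfl⟩⟩ : (pdel w).range)
        = ⟨pdel w a, ⟨a, rfl⟩⟩ * ⟨pdel w b, ⟨b, rfl⟩⟩ := by
      ext; simp
    simp only [phiFun]
    rw [hmul, map_mul, mul_inv_rev]
    have hcen : pdel w (b * (sect w ⟨pdel w b, ⟨b, rfl⟩⟩)⁻¹) = 1 :=
      phiFun_pdel_eq_one b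
    have hc := pdel_ker_central hcen ((sect w ⟨pdel w a, ⟨a, rfl⟩⟩)⁻¹)
    calc a * b * ((sect w ⟨pdel w b, ⟨b, rfl⟩⟩)⁻¹ * (sect w ⟨pdel w a, ⟨a, rfl⟩⟩)⁻¹)
        = a * ((b * (sect w ⟨pdel w b, ⟨b, rfl⟩⟩)⁻¹) * (sect w ⟨pdel w a, ⟨a, rfl⟩⟩)⁻¹) := by
          group
      _ = a * ((sect w ⟨pdel w a, ⟨a, rfl⟩⟩)⁻¹ * (b * (sect w ⟨pdel w b, ⟨b, rfl⟩⟩)⁻¹)) := by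
          rw [hc]
      _ = a * (sect w ⟨pdel w a, ⟨a, rfl⟩⟩)⁻¹ * (b * (sect w ⟨pdel w b, ⟨b, rfl⟩⟩)⁻¹) := by
          group

lemma commutator_le_ker_phi : commutator (PC w) ≤ (phi w).ker := by
  rw [commutator_def, Subgroup.commutator_le]
  intro a _ b _
  rw [MonoidHom.mem_ker, map_commutatorElement, commutatorElement_eq_one_iff_commute]
  exact pdel_ker_central (phiFun_pdel_eq_one a) (phi w b)

end PeifferAux

namespace PeifferAux

variable {X R : Type} {w : R → FreeGroup X}

local notation "YL" => YLetter X R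

/-- A chosen representative in the free group of an element of the presented group. -/
noncomputable def rep (w : R → FreeGroup X) (g : PresGroup w) : FreeGroup X :=
  (QuotientGroup.mk'_surjective (Subgroup.normalClosure (Set.range w)) g).choose

lemma theta_rep (g : PresGroup w) : theta w (rep w g) = g :=
  (QuotientGroup.mk'_surjective (Subgroup.normalClosure (Set.range w)) g).choose_spec

/-- Image in the (additivized) abelianization of `PC w` of a positive letter. -/
noncomputable def aelem (w : R → FreeGroup X) (ρ : R) (g : PresGroup w) :
    Additive (Abelianization (PC w)) :=
  Additive.ofMul (Abelianization.of (PC.mk w [((ρ, rep w g), true)]))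

/-- Positive letters with `θ`-equal words have the same image in the abelianization. -/
lemma abel_letter_congr {ρ : R} {u u' : FreeGroup X} (h : theta w u = theta w u') :
    Abelianization.of (PC.mk w [((ρ, u), true)])
      = Abelianization.of (PC.mk w [((ρ, u'), true)]) := by
  have hmem : u⁻¹ * u' ∈ Subgroup.normalClosure (Set.range w) := by
    have : theta w (u⁻¹ * u') = 1 := by rw [map_mul, map_inv, h]; simp
    exact (QuotientGroup.eq_one_iff _).1 this
  obtain ⟨σ, hσ⟩ := exists_deltaSeq hmem
  have hact : actLetter (deltaSeq w σ) (((ρ, u), true) : YL) = (((ρ, u'), true) : YL) := by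
    rw [hσ]; simp [actLetter]
  have hconj := pe_conj (w := w) σ [((ρ, u), true)]
  have : PC.mk w [(((ρ, u'), true) : YL)]
      = (PC.mk w σ)⁻¹ * PC.mk w [((ρ, u), true)] * PC.mk w σ := by
    rw [PC.mk_inv, PC.mk_mul, PC.mk_mul]
    refine (Quotient.sound ?_).symm
    refine pe_trans (by exact hconj) ?_
    rw [show actSeq (deltaSeq w σ) [(((ρ, u), true) : YL)]
      = [(((ρ, u'), true) : YL)] by simp [actSeq, hact]]
    exact pe_refl
  rw [this, map_mul, map_mul, map_inv,
    mul_comm ((Abelianization.of (PC.mk w σ))⁻¹)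
      (Abelianization.of (PC.mk w [(((ρ, u), true) : YL)]))]
  simp [mul_assoc]

/-- A negative letter is inverse to the corresponding positive letter. -/
lemma mk_neg_letter (p : R × FreeGroup X) :
    PC.mk w [((p, false) : YL)] = (PC.mk w [((p, true) : YL)])⁻¹ := by
  refine eq_inv_of_mul_eq_one_left ?_
  rw [PC.mk_mul]
  exact Quotient.sound (pe_cancel' (((p, true)) : YL))

/-- The comparison homomorphism `β : ℤG[ℛ] → (PC w)ᵃᵇ`. -/
noncomputable def beta (w : R → FreeGroup X) :
    (R →₀ MonoidAlgebra ℤ (PresGroup w)) →+ Additive (Abelianization (PC w)) :=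
  Finsupp.liftAddHom (fun ρ =>
    ((Finsupp.liftAddHom (fun g => zmultiplesHom _ (aelem w ρ g)) :
      (PresGroup w →₀ ℤ) →+ Additive (Abelianization (PC w))).comp
        MonoidAlgebra.coeffAddEquiv.toAddMonoidHom))

lemma beta_alphaLetter (y : YL) :
    beta w (alphaLetter w y) = Additive.ofMul (Abelianization.of (PC.mk w [y])) := by
  obtain ⟨⟨ρ, u⟩, b⟩ := y
  have key : aelem w ρ (theta w u)
      = Additive.ofMul (Abelianization.of (PC.mk w [((ρ, u), true)])) := by
    rw [aelem]
    exact congrArg Additive.ofMul (abel_letter_congr (by rw [theta_rep]))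
  cases b
  · -- negative letter
    have ha : alphaLetter w ((((ρ, u)), false) : YL)
        = Finsupp.single ρ (MonoidAlgebra.single (theta w u) (-1 : ℤ)) := by
      simp [alphaLetter]
    rw [ha, beta, Finsupp.liftAddHom_apply_single]
    rw [AddMonoidHom.comp_apply, AddEquiv.coe_toAddMonoidHom, MonoidAlgebra.coeffAddEquiv_apply,
      MonoidAlgebra.coeff_single]
    erw [Finsupp.liftAddHom_apply_single]
    rw [zmultiplesHom_apply, neg_smul, one_smul, key, mk_neg_letter, map_inv]
    rfl
  · -- positive letter
    have ha : alphaLetter w ((((ρ, u)), true) : YL)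
        = Finsupp.single ρ (MonoidAlgebra.single (theta w u) (1 : ℤ)) := by
      simp [alphaLetter]
    rw [ha, beta, Finsupp.liftAddHom_apply_single]
    rw [AddMonoidHom.comp_apply, AddEquiv.coe_toAddMonoidHom, MonoidAlgebra.coeffAddEquiv_apply,
      MonoidAlgebra.coeff_single]
    erw [Finsupp.liftAddHom_apply_single]
    rw [zmultiplesHom_apply, one_smul]
    exact key

lemma beta_alphaSeq (l : List YL) :
    beta w (alphaSeq w l) = Additive.ofMul (Abelianization.of (PC.mk w l)) := by
  induction l with
  | nil => simp [PC.one_def.symm]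
  | cons y l ih =>
    rw [alphaSeq_cons, map_add, beta_alphaLetter, ih]
    have : PC.mk w (y :: l) = PC.mk w [y] * PC.mk w l := rfl
    rw [this, map_mul]
    rfl

end PeifferAux

/-- An identity Y-sequence is Peiffer equivalent to the empty sequence if and
only if `α(ι) = 0` in the free right `ℤG`-module `ℤG[ℛ]`. -/
theorem stmt19 {X R : Type} (w : R → FreeGroup X)
    (ι : List (YLetter X R)) (hid : deltaSeq w ι = 1) :
    PeifferEquiv w ι [] ↔ alphaSeq w ι = 0 := by
  open PeifferAux in
  constructor
  · intro h
    rw [alpha_pe h, alphaSeq_nil]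
  · intro h
    have h1 : Abelianization.of (PC.mk w ι) = 1 := by
      have := beta_alphaSeq (w := w) ι
      rw [h, map_zero] at this
      exact (Additive.ofMul.injective this.symm : _)
    have h2 : PC.mk w ι ∈ commutator (PC w) := by
      exact (QuotientGroup.eq_one_iff _).1 h1
    have h3 : phi w (PC.mk w ι) = 1 := commutator_le_ker_phi h2
    have h4 : phi w (PC.mk w ι) = PC.mk w ι := by
      show phiFun w (PC.mk w ι) = PC.mk w ι
      rw [phiFun]
      have he : (⟨pdel w (PC.mk w ι), ⟨PC.mk w ι, rfl⟩⟩ : (pdel w).range) = 1 := by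
        ext
        simpa using hid
      rw [he, map_one]
      simp
    have h5 : PC.mk w ι = PC.mk w [] := by rw [← h4, h3]; rfl
    exact Quotient.exact h5
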